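/- Let H₁ and H₂ be complex Hilbert spaces, X : H₂ → H₁ and Y : H₁ → H₂ bounded linear operators, and let T be the off-diagonal operator matrix on H₁ ⊕ H₂ given by T(x₁, x₂) = (X x₂, Y x₁). Set P = XX* + Y*Y (an operator on H₁). Then w(T)⁴ ≤ (1/16)‖P‖² + (1/4)w(XY)² + (1/8)w((XY)P + P(XY)). -/

import Mathlib

set_option linter.unusedSectionVars false
set_option maxHeartbeats 1000000

noncomputable def numRadius {H : Type*} [NormedAddCommGroup H] [InnerProductSpace ℂ H]
    (T : H →L[ℂ] H) : ℝ :=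
  sSup {r : ℝ | ∃ x : H, ‖x‖ = 1 ∧ r = ‖(inner ℂ (T x) x : ℂ)‖}

section Aux

variable {H : Type*} [NormedAddCommGroup H] [InnerProductSpace ℂ H] [CompleteSpace H]

lemma numRadius_bddAbove (T : H →L[ℂ] H) :
    BddAbove {r : ℝ | ∃ x : H, ‖x‖ = 1 ∧ r = ‖(inner ℂ (T x) x : ℂ)‖} := by
  refine ⟨‖T‖, fun r hr => ?_⟩
  obtain ⟨x, hx, rfl⟩ := hr
  calc ‖(inner ℂ (T x) x : ℂ)‖ ≤ ‖T x‖ * ‖x‖ := norm_inner_le_norm _ _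
    _ ≤ ‖T‖ * ‖x‖ * ‖x‖ := by gcongr; exact T.le_opNorm x
    _ = ‖T‖ := by rw [hx]; ring

lemma numRadius_nonneg (T : H →L[ℂ] H) : 0 ≤ numRadius T :=
  Real.sSup_nonneg (by rintro r ⟨x, hx, rfl⟩; positivity)

lemma le_numRadius (T : H →L[ℂ] H) {x : H} (hx : ‖x‖ = 1) :
    ‖(inner ℂ (T x) x : ℂ)‖ ≤ numRadius T :=
  le_csSup (numRadius_bddAbove T) ⟨x, hx, rfl⟩

/-- For a self-adjoint operator, the norm is bounded by any bound on the numerical range. -/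
lemma selfAdjoint_norm_le (S : H →L[ℂ] H) (hS : IsSelfAdjoint S) {M : ℝ} (hM : 0 ≤ M)
    (h : ∀ x : H, ‖x‖ = 1 → ‖(inner ℂ (S x) x : ℂ)‖ ≤ M) : ‖S‖ ≤ M := by
  have hquad : ∀ x : H, ‖(inner ℂ (S x) x : ℂ)‖ ≤ M * ‖x‖ ^ 2 := by
    intro x
    rcases eq_or_ne x 0 with rfl | hx
    · simp
    · have hn : ‖x‖ ≠ 0 := norm_ne_zero_iff.2 hx
      set c : ℂ := ((‖x‖⁻¹ : ℝ) : ℂ) with hc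
      have hcx : ‖c • x‖ = 1 := by
        rw [norm_smul, hc, Complex.norm_real, Real.norm_eq_abs, abs_of_nonneg (by positivity)]
        field_simp
      have := h _ hcx
      rw [map_smul, inner_smul_left, inner_smul_right] at this
      have hcnorm : ‖(starRingEnd ℂ) c * (c * (inner ℂ (S x) x : ℂ))‖
          = ‖x‖⁻¹ ^ 2 * ‖(inner ℂ (S x) x : ℂ)‖ := by
        simp [norm_mul, hc, sq]; ring
      rw [hcnorm] at this
      calc ‖(inner ℂ (S x) x : ℂ)‖ = ‖x‖ ^ 2 * (‖x‖⁻¹ ^ 2 * ‖(inner ℂ (S x) x : ℂ)‖) := by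
            field_simp
        _ ≤ ‖x‖ ^ 2 * M := by gcongr
        _ = M * ‖x‖ ^ 2 := by ring
  -- polarization: for all x y, 4 * re ⟪S x, y⟫ ≤ 2 M (‖x‖² + ‖y‖²)
  have key : ∀ x y : H, 4 * (inner ℂ (S x) y : ℂ).re ≤ 2 * M * (‖x‖ ^ 2 + ‖y‖ ^ 2) := by
    intro x y
    have hsym : (inner ℂ (S y) x : ℂ) = (starRingEnd ℂ) (inner ℂ (S x) y : ℂ) := by
      rw [← inner_conj_symm]
      congr 1
      calc (inner ℂ x (S y) : ℂ) = inner ℂ ((ContinuousLinearMap.adjoint S) x) y := by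
            rw [ContinuousLinearMap.adjoint_inner_left]
        _ = inner ℂ (S x) y := by rw [hS.adjoint_eq]
    have hpol : (inner ℂ (S (x + y)) (x + y) : ℂ) - inner ℂ (S (x - y)) (x - y)
        = ((4 * (inner ℂ (S x) y : ℂ).re : ℝ) : ℂ) := by
      have expand : (inner ℂ (S (x + y)) (x + y) : ℂ) - inner ℂ (S (x - y)) (x - y)
          = 2 * ((inner ℂ (S x) y : ℂ) + (starRingEnd ℂ) (inner ℂ (S x) y : ℂ)) := by
        rw [map_add, map_sub, inner_add_left, inner_add_right, inner_add_right,
          inner_sub_left, inner_sub_right, inner_sub_right, ← hsym]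
        ring
      rw [expand, Complex.add_conj]
      push_cast
      ring
    have hre : 4 * (inner ℂ (S x) y : ℂ).re
        = (inner ℂ (S (x + y)) (x + y) : ℂ).re - (inner ℂ (S (x - y)) (x - y) : ℂ).re := by
      have := congrArg Complex.re hpol
      simpa [Complex.sub_re] using this.symm
    have habs1 : |(inner ℂ (S (x + y)) (x + y) : ℂ).re| ≤ M * ‖x + y‖ ^ 2 :=
      (Complex.abs_re_le_norm _).trans (by exact hquad _)
    have habs2 : |(inner ℂ (S (x - y)) (x - y) : ℂ).re| ≤ M * ‖x - y‖ ^ 2 :=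
      (Complex.abs_re_le_norm _).trans (by exact hquad _)
    have hpar : ‖x + y‖ ^ 2 + ‖x - y‖ ^ 2 = 2 * (‖x‖ ^ 2 + ‖y‖ ^ 2) := by
      have := parallelogram_law_with_norm ℂ x y
      nlinarith [this]
    have e1 := abs_le.mp habs1
    have e2 := abs_le.mp habs2
    nlinarith [hre, e1.2, e2.1]
  -- conclude
  refine S.opNorm_le_bound hM fun x => ?_
  rcases eq_or_ne (S x) 0 with hSx | hSx
  · simp [hSx]; positivity
  · have hns : ‖S x‖ ≠ 0 := norm_ne_zero_iff.2 hSx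
    have hxn : ‖x‖ ≠ 0 := by
      intro h0
      apply hSx
      have : x = 0 := norm_eq_zero.mp h0
      simp [this]
    set y : H := ((‖x‖ * ‖S x‖⁻¹ : ℝ) : ℂ) • S x with hy
    have hyn : ‖y‖ = ‖x‖ := by
      rw [hy, norm_smul, Complex.norm_real, Real.norm_eq_abs,
        abs_of_nonneg (by positivity)]
      field_simp
    have hinner : (inner ℂ (S x) y : ℂ).re = ‖x‖ * ‖S x‖ := by
      rw [hy, inner_smul_right]
      simp [inner_self_eq_norm_sq_to_K, ← Complex.ofReal_pow]
      field_simp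
    have := key x y
    rw [hinner, hyn] at this
    have hx2 : (0:ℝ) < ‖x‖ := lt_of_le_of_ne (norm_nonneg x) (Ne.symm hxn)
    nlinarith [this]

lemma norm_smul_add_star_le (A : H →L[ℂ] H) (v : ℂ) (hv : ‖v‖ = 1) :
    ‖v • A + star (v • A)‖ ≤ 2 * numRadius A := by
  refine selfAdjoint_norm_le _ (IsSelfAdjoint.add_star_self _)
    (by linarith [numRadius_nonneg A]) fun x hx => ?_
  have hst : (inner ℂ ((star (v • A)) x) x : ℂ)
      = (starRingEnd ℂ) (inner ℂ ((v • A) x) x : ℂ) := by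
    rw [ContinuousLinearMap.star_eq_adjoint, ContinuousLinearMap.adjoint_inner_left,
      ← inner_conj_symm]
  have goal2 : (inner ℂ ((v • A + star (v • A)) x) x : ℂ)
      = ((2 * ((inner ℂ ((v • A) x) x : ℂ)).re : ℝ) : ℂ) := by
    rw [ContinuousLinearMap.add_apply, inner_add_left, hst, Complex.add_conj]
  rw [goal2]
  have h1 : ‖(inner ℂ ((v • A) x) x : ℂ)‖ = ‖(inner ℂ (A x) x : ℂ)‖ := by
    rw [ContinuousLinearMap.smul_apply, inner_smul_left, norm_mul]
    simp [hv]
  calc ‖(((2 * ((inner ℂ ((v • A) x) x : ℂ)).re : ℝ)) : ℂ)‖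
      = |2 * ((inner ℂ ((v • A) x) x : ℂ)).re| := by rw [Complex.norm_real, Real.norm_eq_abs]
    _ ≤ 2 * ‖(inner ℂ ((v • A) x) x : ℂ)‖ := by
        rw [abs_mul]
        simp only [abs_two]
        gcongr
        exact Complex.abs_re_le_norm _
    _ = 2 * ‖(inner ℂ (A x) x : ℂ)‖ := by rw [h1]
    _ ≤ 2 * numRadius A := by gcongr; exact le_numRadius A hx

end Aux

open ContinuousLinearMap in
lemma norm_Z_pow_four_le
    {H₁ H₂ : Type*} [NormedAddCommGroup H₁] [InnerProductSpace ℂ H₁]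
    [NormedAddCommGroup H₂] [InnerProductSpace ℂ H₂]
    [CompleteSpace H₁] [CompleteSpace H₂]
    (X : H₂ →L[ℂ] H₁) (Y : H₁ →L[ℂ] H₂) (P : H₁ →L[ℂ] H₁)
    (hP : P = X.comp (adjoint X) + (adjoint Y).comp Y)
    (c d : ℂ) (hc : ‖c‖ = 1) (hd : ‖d‖ = 1) :
    ‖c • X + d • adjoint Y‖ ^ 4 ≤ ‖P‖ ^ 2 + 4 * numRadius (X.comp Y) ^ 2
      + 2 * numRadius ((X.comp Y).comp P + P.comp (X.comp Y)) := by
  set D : H₁ →L[ℂ] H₁ := X.comp Y with hD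
  set v : ℂ := c * (starRingEnd ℂ) d with hv
  have hvn : ‖v‖ = 1 := by
    rw [hv, norm_mul, hc, RCLike.norm_conj, hd, one_mul]
  set Z : H₂ →L[ℂ] H₁ := c • X + d • adjoint Y with hZ
  set E : H₁ →L[ℂ] H₁ := v • D + star (v • D) with hE
  have hPsa : star P = P := by
    simp [hP, star_add, star_eq_adjoint, adjoint_comp, adjoint_adjoint]
  -- adjoint of Z
  have hZa : adjoint Z = (starRingEnd ℂ) c • adjoint X + (starRingEnd ℂ) d • Y := by
    rw [hZ, map_add, LinearIsometryEquiv.map_smulₛₗ, LinearIsometryEquiv.map_smulₛₗ,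
      adjoint_adjoint]
  -- Z Z* = P + E
  have hcc : c * (starRingEnd ℂ) c = 1 := by
    rw [RCLike.mul_conj, hc]; norm_num
  have hdd : d * (starRingEnd ℂ) d = 1 := by
    rw [RCLike.mul_conj, hd]; norm_num
  have hstar : star (v • D) = ((starRingEnd ℂ) c * d) • ((adjoint Y).comp (adjoint X)) := by
    rw [star_smul, ContinuousLinearMap.star_eq_adjoint, hD, adjoint_comp]
    congr 1
    rw [hv]
    simp [mul_comm]
  have hZZ : Z.comp (adjoint Z) = P + E := by
    rw [hZa, hZ, hP, hE, hstar]
    simp only [add_comp, comp_add, smul_comp, comp_smul, smul_add, smul_smul]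
    rw [show (starRingEnd ℂ) c * c = 1 by rw [RCLike.conj_mul, hc]; norm_num,
      show (starRingEnd ℂ) d * d = 1 by rw [RCLike.conj_mul, hd]; norm_num,
      one_smul, one_smul, hv, hD]
    module
  -- norm identities
  have hZnorm : ‖Z‖ ^ 2 = ‖Z.comp (adjoint Z)‖ := by
    have h := norm_adjoint_comp_self (adjoint Z)
    rw [adjoint_adjoint] at h
    rw [h, (ContinuousLinearMap.adjoint : (H₂ →L[ℂ] H₁) ≃ₗᵢ⋆[ℂ] _).norm_map Z, sq]
  have hEsa : star E = E := by rw [hE, star_add, star_star, add_comm]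
  have hSsa : star (P + E) = P + E := by rw [star_add, hPsa, hEsa]
  have hSS : ‖P + E‖ ^ 2 = ‖(P + E) * (P + E)‖ := by
    have h1 : (P + E) * (P + E) = star (P + E) * (P + E) := by rw [hSsa]
    rw [h1, CStarRing.norm_star_mul_self, sq]
  have expand : (P + E) * (P + E) = P * P + (P * E + E * P) + E * E := by noncomm_ring
  have cross : P * E + E * P
      = v • (D * P + P * D) + star (v • (D * P + P * D)) := by
    rw [hE]
    simp only [star_smul, star_add, star_mul, star_star, hPsa, mul_add, add_mul,
      mul_smul_comm, smul_mul_assoc, smul_add]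
    module
  have hEle : ‖E‖ ≤ 2 * numRadius D := by rw [hE]; exact norm_smul_add_star_le D v hvn
  have hcrossle : ‖P * E + E * P‖ ≤ 2 * numRadius (D * P + P * D) := by
    rw [cross]; exact norm_smul_add_star_le _ v hvn
  have hfinal : ‖Z‖ ^ 4 ≤ ‖P‖ ^ 2 + 4 * numRadius D ^ 2
      + 2 * numRadius (D * P + P * D) := by
    have hDnn : 0 ≤ numRadius D := numRadius_nonneg D
    calc ‖Z‖ ^ 4 = (‖Z‖ ^ 2) ^ 2 := by ring
      _ = ‖(P + E) * (P + E)‖ := by rw [hZnorm, hZZ, hSS]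
      _ = ‖P * P + (P * E + E * P) + E * E‖ := by rw [expand]
      _ ≤ ‖P * P + (P * E + E * P)‖ + ‖E * E‖ := norm_add_le _ _
      _ ≤ ‖P * P‖ + ‖P * E + E * P‖ + ‖E * E‖ := by
          gcongr; exact norm_add_le _ _
      _ ≤ ‖P‖ * ‖P‖ + 2 * numRadius (D * P + P * D) + ‖E‖ * ‖E‖ :=
          add_le_add (add_le_add (norm_mul_le _ _) hcrossle) (norm_mul_le _ _)
      _ ≤ ‖P‖ * ‖P‖ + 2 * numRadius (D * P + P * D)
            + (2 * numRadius D) * (2 * numRadius D) := by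
          have hE2 : ‖E‖ * ‖E‖ ≤ (2 * numRadius D) * (2 * numRadius D) :=
            mul_le_mul hEle hEle (norm_nonneg _) (by linarith)
          linarith
      _ = ‖P‖ ^ 2 + 4 * numRadius D ^ 2 + 2 * numRadius (D * P + P * D) := by ring
  exact hfinal

theorem numRadius_offdiag_pow_four_upper'
    {H₁ H₂ : Type*} [NormedAddCommGroup H₁] [InnerProductSpace ℂ H₁]
    [NormedAddCommGroup H₂] [InnerProductSpace ℂ H₂]
    [CompleteSpace H₁] [CompleteSpace H₂]
    (X : H₂ →L[ℂ] H₁) (Y : H₁ →L[ℂ] H₂)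
    (T : WithLp 2 (H₁ × H₂) →L[ℂ] WithLp 2 (H₁ × H₂))
    (hT : ∀ x : WithLp 2 (H₁ × H₂),
      WithLp.equiv 2 (H₁ × H₂) (T x) =
        (X (WithLp.equiv 2 (H₁ × H₂) x).2, Y (WithLp.equiv 2 (H₁ × H₂) x).1))
    (P : H₁ →L[ℂ] H₁)
    (hP : P = X.comp (ContinuousLinearMap.adjoint X) + (ContinuousLinearMap.adjoint Y).comp Y) :
    (numRadius T) ^ 4 ≤ (1 / 16 : ℝ) * ‖P‖ ^ 2 + (1 / 4 : ℝ) * (numRadius (X.comp Y)) ^ 2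
      + (1 / 8 : ℝ) * numRadius ((X.comp Y).comp P + P.comp (X.comp Y)) := by
  set B : ℝ := (1 / 16 : ℝ) * ‖P‖ ^ 2 + (1 / 4 : ℝ) * (numRadius (X.comp Y)) ^ 2
      + (1 / 8 : ℝ) * numRadius ((X.comp Y).comp P + P.comp (X.comp Y)) with hBdef
  have hG : 0 ≤ numRadius ((X.comp Y).comp P + P.comp (X.comp Y)) := numRadius_nonneg _
  have hB : 0 ≤ B := by
    rw [hBdef]
    have h1 : (0:ℝ) ≤ ‖P‖ ^ 2 := sq_nonneg _
    have h2 : (0:ℝ) ≤ (numRadius (X.comp Y)) ^ 2 := sq_nonneg _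
    linarith
  -- pointwise bound
  have hpt : ∀ x : WithLp 2 (H₁ × H₂), ‖x‖ = 1 → ‖(inner ℂ (T x) x : ℂ)‖ ^ 4 ≤ B := by
    intro x hx
    have hx2 : ‖x.fst‖ ^ 2 + ‖x.snd‖ ^ 2 = 1 := by
      rw [← WithLp.prod_norm_sq_eq_of_L2 x, hx]; norm_num
    have hTx := hT x
    have hfst : (T x).fst = X x.snd := by
      have := congrArg Prod.fst hTx
      exact this
    have hsnd : (T x).snd = Y x.fst := by
      have := congrArg Prod.snd hTx
      exact this
    set a : ℂ := inner ℂ (X x.snd) x.fst with ha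
    set b : ℂ := inner ℂ (Y x.fst) x.snd with hb
    have hinner : (inner ℂ (T x) x : ℂ) = a + b := by
      rw [WithLp.prod_inner_apply]
      exact congrArg₂ (· + ·) (congrArg (inner ℂ · _) hfst) (congrArg (inner ℂ · _) hsnd)
    set c : ℂ := if a = 0 then 1 else a / (‖a‖ : ℂ) with hcdef
    set d : ℂ := if b = 0 then 1 else (starRingEnd ℂ) b / (‖b‖ : ℂ) with hddef
    have hc : ‖c‖ = 1 := by
      rw [hcdef]; split_ifs with h
      · simp
      · rw [norm_div, Complex.norm_real, Real.norm_eq_abs, abs_of_nonneg (norm_nonneg _)]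
        exact div_self (norm_ne_zero_iff.2 h)
    have hd : ‖d‖ = 1 := by
      rw [hddef]; split_ifs with h
      · simp
      · rw [norm_div, RCLike.norm_conj, Complex.norm_real, Real.norm_eq_abs,
          abs_of_nonneg (norm_nonneg _)]
        exact div_self (norm_ne_zero_iff.2 h)
    have hca : (starRingEnd ℂ) c * a = (‖a‖ : ℂ) := by
      rw [hcdef]; split_ifs with h
      · simp [h]
      · have hne : ((‖a‖ : ℝ) : ℂ) ≠ 0 := by
          simpa using norm_ne_zero_iff.2 h
        rw [map_div₀, Complex.conj_ofReal, div_mul_eq_mul_div, RCLike.conj_mul,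
          sq, mul_div_assoc]
        field_simp
        rfl
    have hdb : (starRingEnd ℂ) d * (starRingEnd ℂ) b = (‖b‖ : ℂ) := by
      rw [hddef]; split_ifs with h
      · simp [h]
      · have hne : ((‖b‖ : ℝ) : ℂ) ≠ 0 := by
          simpa using norm_ne_zero_iff.2 h
        rw [map_div₀, Complex.conj_conj, Complex.conj_ofReal, div_mul_eq_mul_div,
          RCLike.mul_conj, sq, mul_div_assoc]
        field_simp
        rfl
    set Z : H₂ →L[ℂ] H₁ := c • X + d • ContinuousLinearMap.adjoint Y with hZ
    have hZx : (inner ℂ (Z x.snd) x.fst : ℂ) = ((‖a‖ : ℝ) : ℂ) + ((‖b‖ : ℝ) : ℂ) := by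
      rw [hZ, ContinuousLinearMap.add_apply, ContinuousLinearMap.smul_apply,
        ContinuousLinearMap.smul_apply, inner_add_left, inner_smul_left, inner_smul_left,
        ContinuousLinearMap.adjoint_inner_left, ← ha]
      have : (inner ℂ x.snd (Y x.fst) : ℂ) = (starRingEnd ℂ) b := by
        rw [hb, ← inner_conj_symm]
      rw [this, hca, hdb]
    have hr1 : ‖(inner ℂ (T x) x : ℂ)‖ ≤ ‖a‖ + ‖b‖ := by
      rw [hinner]; exact norm_add_le a b
    have hr2 : ‖a‖ + ‖b‖ ≤ ‖Z‖ * (‖x.snd‖ * ‖x.fst‖) := by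
      have h1 := norm_inner_le_norm (𝕜 := ℂ) (Z x.snd) x.fst
      rw [hZx] at h1
      have h2 : ‖((‖a‖ : ℝ) : ℂ) + ((‖b‖ : ℝ) : ℂ)‖ = ‖a‖ + ‖b‖ := by
        rw [← Complex.ofReal_add, Complex.norm_real, Real.norm_eq_abs,
          abs_of_nonneg (by positivity)]
      rw [h2] at h1
      calc ‖a‖ + ‖b‖ ≤ ‖Z x.snd‖ * ‖x.fst‖ := h1
        _ ≤ (‖Z‖ * ‖x.snd‖) * ‖x.fst‖ := by
            gcongr; exact Z.le_opNorm _
        _ = ‖Z‖ * (‖x.snd‖ * ‖x.fst‖) := by ring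
    have hr3 : ‖x.snd‖ * ‖x.fst‖ ≤ 1 / 2 := by
      nlinarith [sq_nonneg (‖x.fst‖ - ‖x.snd‖), hx2]
    have hr4 : ‖(inner ℂ (T x) x : ℂ)‖ ≤ ‖Z‖ * (1 / 2) := by
      have : ‖Z‖ * (‖x.snd‖ * ‖x.fst‖) ≤ ‖Z‖ * (1 / 2) := by
        gcongr
      linarith
    have hr5 : ‖(inner ℂ (T x) x : ℂ)‖ ^ 4 ≤ (‖Z‖ * (1 / 2)) ^ 4 :=
      pow_le_pow_left₀ (norm_nonneg _) hr4 4
    have hZ4 := norm_Z_pow_four_le X Y P hP c d hc hd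
    rw [← hZ] at hZ4
    have : (‖Z‖ * (1 / 2)) ^ 4 = ‖Z‖ ^ 4 * (1 / 16) := by ring
    rw [this] at hr5
    rw [hBdef]
    nlinarith [hr5, hZ4]
  -- wrap up with sSup
  have hsup : numRadius T ≤ B ^ ((1 : ℝ) / 4) := by
    apply Real.sSup_le
    · rintro r ⟨x, hx, rfl⟩
      have h4 := hpt x hx
      have hr0 : (0:ℝ) ≤ ‖(inner ℂ (T x) x : ℂ)‖ := norm_nonneg _
      have := Real.rpow_le_rpow (by positivity) h4 (by norm_num : (0:ℝ) ≤ 1/4)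
      calc ‖(inner ℂ (T x) x : ℂ)‖
          = (‖(inner ℂ (T x) x : ℂ)‖ ^ (4:ℕ)) ^ ((1:ℝ)/4) := by
            rw [← Real.rpow_natCast ‖(inner ℂ (T x) x : ℂ)‖ 4, ← Real.rpow_mul hr0]
            norm_num
        _ ≤ B ^ ((1:ℝ)/4) := this
    · positivity
  have h4 : numRadius T ^ 4 ≤ (B ^ ((1:ℝ)/4)) ^ 4 :=
    pow_le_pow_left₀ (numRadius_nonneg T) hsup 4
  calc numRadius T ^ 4 ≤ (B ^ ((1:ℝ)/4)) ^ 4 := h4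
    _ = B := by
      rw [← Real.rpow_natCast (B ^ ((1:ℝ)/4)) 4, ← Real.rpow_mul hB]
      norm_num
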